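/- Let x, y be generators of a grid diagram of size N and let D ∈ 𝒟(x,y). Then A(x) − A(y) = Σ_i (n_{X_i}(D) − n_{O_i}(D)). Moreover, if the grid diagram represents a knot, then A(x) is an integer for every generator x. -/

import Mathlib

/-- A generator of a grid diagram of size `N`: a permutation of `ℤ/N`. -/
abbrev GridGen (N : ℕ) := Equiv.Perm (ZMod N)

/-- The alternating corner sum of a 2-chain `D` at the lattice point `(a, b)`. -/
def cornerSum (N : ℕ) (D : ZMod N → ZMod N → ℤ) (a b : ZMod N) : ℤ :=
  D a b - D (a - 1) b - D a (b - 1) + D (a - 1) (b - 1)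

/-- `D` is a domain from the generator `x` to the generator `y`: the alternating
corner sum at a lattice point `p` is `1` if `p ∈ x \ y`, `-1` if `p ∈ y \ x`, and
`0` otherwise. -/
def IsGridDomain (N : ℕ) (x y : GridGen N) (D : ZMod N → ZMod N → ℤ) : Prop :=
  ∀ a b : ZMod N, cornerSum N D a b =
    if x a = b ∧ y a ≠ b then 1 else if y a = b ∧ x a ≠ b then -1 else 0

/-- The point measure `n_p(D)` at the lattice point `p = (a, b)`: the average of
the values of `D` on the four squares around `p`. -/
def gridNp (N : ℕ) (D : ZMod N → ZMod N → ℤ) (a b : ZMod N) : ℚ :=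
  ((D a b : ℚ) + (D (a - 1) b : ℚ) + (D a (b - 1) : ℚ) + (D (a - 1) (b - 1) : ℚ)) / 4

/-- The Maslov index `μ(D) = Σ_i (n_{(i, x i)}(D) + n_{(i, y i)}(D))`. -/
def maslovIndex (N : ℕ) [NeZero N] (x y : GridGen N) (D : ZMod N → ZMod N → ℤ) : ℚ :=
  ∑ i : ZMod N, (gridNp N D i (x i) + gridNp N D i (y i))
/-- `J(a, b) = 1/2` if `(a₁ - b₁)(a₂ - b₂) > 0` and `0` otherwise. -/
noncomputable def Jpt (p q : ℝ × ℝ) : ℚ :=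
  if 0 < (p.1 - q.1) * (p.2 - q.2) then 1 / 2 else 0

/-- The planar point corresponding to a coordinate `(i, b)` of a generator,
representing `ℤ/N` by `{0, 1, …, N-1} ⊂ ℝ`. -/
noncomputable def genPt (N : ℕ) (i b : ZMod N) : ℝ × ℝ :=
  ((ZMod.val i : ℝ), (ZMod.val b : ℝ))

/-- The planar point of the marking in column `i` determined by the permutation
`σ`: the centre `(i + 1/2, σ i + 1/2)` of the square `(i, σ i)`. -/
noncomputable def markPt (N : ℕ) (σ : GridGen N) (i : ZMod N) : ℝ × ℝ :=
  ((ZMod.val i : ℝ) + 1 / 2, (ZMod.val (σ i) : ℝ) + 1 / 2)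

/-- The absolute Maslov grading `M(x) = J(x - 𝕆, x - 𝕆) + 1`, with `J` extended
bilinearly to formal sums of points. -/
noncomputable def MaslovGrading (N : ℕ) [NeZero N] (σO : GridGen N) (x : GridGen N) : ℚ :=
  (∑ i : ZMod N, ∑ j : ZMod N,
      (Jpt (genPt N i (x i)) (genPt N j (x j)) - Jpt (genPt N i (x i)) (markPt N σO j) -
        Jpt (markPt N σO i) (genPt N j (x j)) + Jpt (markPt N σO i) (markPt N σO j))) + 1

/-- The absolute Alexander grading
`A(x) = J(x - (𝕏 + 𝕆)/2, 𝕏 - 𝕆) - (N - 1)/2`, with `J` extended bilinearly to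
formal sums of points. -/
noncomputable def AlexGrading (N : ℕ) [NeZero N] (σO σX : GridGen N) (x : GridGen N) : ℚ :=
  (∑ i : ZMod N, ∑ j : ZMod N,
      (Jpt (genPt N i (x i)) (markPt N σX j) - Jpt (genPt N i (x i)) (markPt N σO j) -
        (1 / 2) * Jpt (markPt N σX i) (markPt N σX j) +
        (1 / 2) * Jpt (markPt N σX i) (markPt N σO j) -
        (1 / 2) * Jpt (markPt N σO i) (markPt N σX j) +
        (1 / 2) * Jpt (markPt N σO i) (markPt N σO j))) - ((N : ℚ) - 1) / 2
/-- The grid diagram `(σO, σX)` represents a knot: `σX⁻¹ ∘ σO` is an `N`-cycle. -/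
def GridIsKnot (N : ℕ) [NeZero N] (σO σX : GridGen N) : Prop :=
  (σX⁻¹ * σO).IsCycle ∧ (σX⁻¹ * σO).support = Finset.univ

namespace GridAux

open Finset

lemma half_pos_iff (m n : ℕ) : (0:ℝ) < (m:ℝ) - n - 1/2 ↔ n < m := by
  constructor
  · intro h
    by_contra hc
    push_neg at hc
    have : (m:ℝ) ≤ n := by exact_mod_cast hc
    linarith
  · intro h
    have : (n:ℝ) + 1 ≤ m := by exact_mod_cast h
    linarith

lemma half_neg_iff (m n : ℕ) : (m:ℝ) - n - 1/2 < 0 ↔ m ≤ n := by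
  constructor
  · intro h
    by_contra hc
    push_neg at hc
    have : (n:ℝ) + 1 ≤ m := by exact_mod_cast hc
    linarith
  · intro h
    have : (m:ℝ) ≤ n := by exact_mod_cast h
    linarith

lemma Jpt_gen_mark' (m p n q : ℕ) :
    Jpt ((m:ℝ), (p:ℝ)) ((n:ℝ) + 1/2, (q:ℝ) + 1/2)
      = (if m ≤ n ∧ p ≤ q then (1:ℚ) else 0) + 1/2
        - (1/2) * (if m ≤ n then (1:ℚ) else 0) - (1/2) * (if p ≤ q then (1:ℚ) else 0) := by
  unfold Jpt
  dsimp only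
  have hcond : (0 < ((m:ℝ) - ((n:ℝ) + 1/2)) * ((p:ℝ) - ((q:ℝ) + 1/2)))
      ↔ ((n < m ∧ q < p) ∨ (m ≤ n ∧ p ≤ q)) := by
    rw [show (m:ℝ) - ((n:ℝ) + 1/2) = (m:ℝ) - n - 1/2 from by ring,
      show (p:ℝ) - ((q:ℝ) + 1/2) = (p:ℝ) - q - 1/2 from by ring, mul_pos_iff,
      half_pos_iff, half_pos_iff, half_neg_iff, half_neg_iff]
  by_cases h1 : m ≤ n <;> by_cases h2 : p ≤ q
  · rw [if_pos (hcond.2 (Or.inr ⟨h1, h2⟩)), if_pos ⟨h1, h2⟩, if_pos h1, if_pos h2]; norm_num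
  · rw [if_neg (fun hc => by rcases hcond.1 hc with ⟨ha, hb⟩ | ⟨ha, hb⟩ <;> omega),
      if_neg (by tauto), if_pos h1, if_neg h2]
    norm_num
  · rw [if_neg (fun hc => by rcases hcond.1 hc with ⟨ha, hb⟩ | ⟨ha, hb⟩ <;> omega),
      if_neg (by tauto), if_neg h1, if_pos h2]
    norm_num
  · rw [if_pos (hcond.2 (Or.inl ⟨by omega, by omega⟩)), if_neg (by tauto), if_neg h1, if_neg h2]
    norm_num

lemma Jpt_mark_mark' (m p n q : ℕ) :
    Jpt ((m:ℝ) + 1/2, (p:ℝ) + 1/2) ((n:ℝ) + 1/2, (q:ℝ) + 1/2)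
      = (1/2) * (if n < m ∧ q < p then (1:ℚ) else 0)
        + (1/2) * (if m < n ∧ p < q then (1:ℚ) else 0) := by
  unfold Jpt
  dsimp only
  have hcond : (0 < ((m:ℝ) + 1/2 - ((n:ℝ) + 1/2)) * ((p:ℝ) + 1/2 - ((q:ℝ) + 1/2)))
      ↔ ((n < m ∧ q < p) ∨ (m < n ∧ p < q)) := by
    rw [show ((m:ℝ) + 1/2 - ((n:ℝ) + 1/2)) * ((p:ℝ) + 1/2 - ((q:ℝ) + 1/2))
        = ((m:ℝ) - n) * ((p:ℝ) - q) from by ring, mul_pos_iff, sub_pos, sub_pos, sub_neg,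
      sub_neg, Nat.cast_lt, Nat.cast_lt, Nat.cast_lt, Nat.cast_lt]
  by_cases hA : n < m ∧ q < p
  · rw [if_pos (hcond.2 (Or.inl hA)), if_pos hA, if_neg (by omega)]; norm_num
  · by_cases hB : m < n ∧ p < q
    · rw [if_pos (hcond.2 (Or.inr hB)), if_neg hA, if_pos hB]; norm_num
    · rw [if_neg (fun hc => by tauto), if_neg hA, if_neg hB]; norm_num

lemma Jpt_comm (p q : ℝ × ℝ) : Jpt p q = Jpt q p := by
  unfold Jpt
  rw [show (p.1 - q.1) * (p.2 - q.2) = (q.1 - p.1) * (q.2 - p.2) from by ring]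

section Sums

variable (N : ℕ) [NeZero N]

/-- Integer count of points of the generator `w` weakly southwest of `(a, b)` in `val` order. -/
def cntZ (w : GridGen N) (a b : ZMod N) : ℤ :=
  ∑ i : ZMod N, if i.val ≤ a.val ∧ (w i).val ≤ b.val then 1 else 0

def TQ (b : ZMod N) : ℚ := ∑ i : ZMod N, if i.val ≤ b.val then 1 else 0

lemma cntZ_cast (w : GridGen N) (a b : ZMod N) :
    ((cntZ N w a b : ℤ) : ℚ) = ∑ i : ZMod N, if i.val ≤ a.val ∧ (w i).val ≤ b.val then 1 else 0 := by
  rw [cntZ]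
  push_cast [apply_ite ((↑·) : ℤ → ℚ)]
  rfl

lemma sum_Jpt_gen_mark (w σ : GridGen N) (j : ZMod N) :
    ∑ i : ZMod N, Jpt (genPt N i (w i)) (markPt N σ j)
      = (cntZ N w j (σ j) : ℚ) + (N : ℚ)/2 - (1/2) * TQ N j - (1/2) * TQ N (σ j) := by
  have hpt : ∀ i : ZMod N, Jpt (genPt N i (w i)) (markPt N σ j)
      = (if i.val ≤ j.val ∧ (w i).val ≤ (σ j).val then (1:ℚ) else 0) + 1/2
        - (1/2) * (if i.val ≤ j.val then (1:ℚ) else 0)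
        - (1/2) * (if (w i).val ≤ (σ j).val then (1:ℚ) else 0) := fun i =>
    Jpt_gen_mark' i.val (w i).val j.val (σ j).val
  rw [Finset.sum_congr rfl fun i _ => hpt i]
  have hw : ∑ i : ZMod N, (if (w i).val ≤ (σ j).val then (1:ℚ) else 0) = TQ N (σ j) :=
    Equiv.sum_comp w (fun u : ZMod N => if u.val ≤ (σ j).val then (1:ℚ) else 0)
  simp only [Finset.sum_sub_distrib, Finset.sum_add_distrib, ← Finset.mul_sum, hw]
  have hconst : ∑ _i : ZMod N, (1/2 : ℚ) = (N:ℚ)/2 := by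
    simp [Finset.sum_const, Finset.card_univ, ZMod.card, nsmul_eq_mul]
    ring
  have hTj : ∑ i : ZMod N, (if i.val ≤ j.val then (1:ℚ) else 0) = TQ N j := rfl
  rw [hTj, ← cntZ_cast, hconst]


/-- Number of (ordered, increasing) agreeing pairs of the permutation `σ` in `val` order. -/
def nizN (σ : GridGen N) : ℕ :=
  ∑ i : ZMod N, ∑ j : ZMod N, if i.val < j.val ∧ (σ i).val < (σ j).val then 1 else 0

lemma nizN_cast (σ : GridGen N) :
    ((nizN N σ : ℕ) : ℚ)
      = ∑ i : ZMod N, ∑ j : ZMod N,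
          (if i.val < j.val ∧ (σ i).val < (σ j).val then (1:ℚ) else 0) := by
  rw [nizN]
  push_cast [apply_ite ((↑·) : ℕ → ℚ)]
  rfl

lemma sum_Jpt_mark_mark (σ : GridGen N) :
    ∑ i : ZMod N, ∑ j : ZMod N, Jpt (markPt N σ i) (markPt N σ j) = (nizN N σ : ℚ) := by
  have hpt : ∀ i j : ZMod N, Jpt (markPt N σ i) (markPt N σ j)
      = (1/2) * (if j.val < i.val ∧ (σ j).val < (σ i).val then (1:ℚ) else 0)
        + (1/2) * (if i.val < j.val ∧ (σ i).val < (σ j).val then (1:ℚ) else 0) := fun i j =>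
    Jpt_mark_mark' i.val (σ i).val j.val (σ j).val
  calc ∑ i : ZMod N, ∑ j : ZMod N, Jpt (markPt N σ i) (markPt N σ j)
      = ∑ i : ZMod N, ∑ j : ZMod N,
          ((1/2) * (if j.val < i.val ∧ (σ j).val < (σ i).val then (1:ℚ) else 0)
            + (1/2) * (if i.val < j.val ∧ (σ i).val < (σ j).val then (1:ℚ) else 0)) :=
        Finset.sum_congr rfl fun i _ => Finset.sum_congr rfl fun j _ => hpt i j
    _ = (1/2) * (∑ i : ZMod N, ∑ j : ZMod N,
            (if j.val < i.val ∧ (σ j).val < (σ i).val then (1:ℚ) else 0))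
        + (1/2) * (∑ i : ZMod N, ∑ j : ZMod N,
            (if i.val < j.val ∧ (σ i).val < (σ j).val then (1:ℚ) else 0)) := by
        simp only [Finset.sum_add_distrib, ← Finset.mul_sum]
    _ = (nizN N σ : ℚ) := by
        rw [Finset.sum_comm (f := fun i j : ZMod N =>
          (if j.val < i.val ∧ (σ j).val < (σ i).val then (1:ℚ) else 0)), ← nizN_cast]
        ring

lemma sum_Jpt_mark_comm (σ τ : GridGen N) :
    ∑ i : ZMod N, ∑ j : ZMod N, Jpt (markPt N σ i) (markPt N τ j)
      = ∑ i : ZMod N, ∑ j : ZMod N, Jpt (markPt N τ i) (markPt N σ j) := by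
  rw [Finset.sum_comm]
  exact Finset.sum_congr rfl fun i _ => Finset.sum_congr rfl fun j _ => Jpt_comm _ _

lemma alex_formula (σO σX w : GridGen N) :
    AlexGrading N σO σX w
      = (∑ j : ZMod N, ((cntZ N w j (σX j) : ℚ) - (cntZ N w j (σO j) : ℚ)))
        + ((nizN N σO : ℚ) - (nizN N σX : ℚ)) / 2 - ((N:ℚ) - 1)/2 := by
  unfold AlexGrading
  have split : ∑ i : ZMod N, ∑ j : ZMod N,
      (Jpt (genPt N i (w i)) (markPt N σX j) - Jpt (genPt N i (w i)) (markPt N σO j) -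
        (1 / 2) * Jpt (markPt N σX i) (markPt N σX j) +
        (1 / 2) * Jpt (markPt N σX i) (markPt N σO j) -
        (1 / 2) * Jpt (markPt N σO i) (markPt N σX j) +
        (1 / 2) * Jpt (markPt N σO i) (markPt N σO j))
    = (∑ i : ZMod N, ∑ j : ZMod N, Jpt (genPt N i (w i)) (markPt N σX j))
      - (∑ i : ZMod N, ∑ j : ZMod N, Jpt (genPt N i (w i)) (markPt N σO j))
      - (1/2) * (∑ i : ZMod N, ∑ j : ZMod N, Jpt (markPt N σX i) (markPt N σX j))
      + (1/2) * (∑ i : ZMod N, ∑ j : ZMod N, Jpt (markPt N σX i) (markPt N σO j))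
      - (1/2) * (∑ i : ZMod N, ∑ j : ZMod N, Jpt (markPt N σO i) (markPt N σX j))
      + (1/2) * (∑ i : ZMod N, ∑ j : ZMod N, Jpt (markPt N σO i) (markPt N σO j)) := by
    simp only [Finset.sum_add_distrib, Finset.sum_sub_distrib, ← Finset.mul_sum]
  rw [split, sum_Jpt_mark_mark, sum_Jpt_mark_mark, sum_Jpt_mark_comm N σO σX]
  have hgen : ∀ τ : GridGen N, ∑ i : ZMod N, ∑ j : ZMod N, Jpt (genPt N i (w i)) (markPt N τ j)
      = ∑ j : ZMod N, ((cntZ N w j (τ j) : ℚ) + (N : ℚ)/2 - (1/2) * TQ N j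
          - (1/2) * TQ N (τ j)) := by
    intro τ
    rw [Finset.sum_comm]
    exact Finset.sum_congr rfl fun j _ => sum_Jpt_gen_mark N w τ j
  rw [hgen σX, hgen σO]
  have hT : ∀ τ : GridGen N, ∑ j : ZMod N, TQ N (τ j) = ∑ j : ZMod N, TQ N j := fun τ =>
    Equiv.sum_comp τ (TQ N)
  simp only [Finset.sum_sub_distrib, Finset.sum_add_distrib, ← Finset.mul_sum, hT]
  ring


end Sums

section Domain

variable (N : ℕ) [NeZero N]

lemma val_cast_val (a : ZMod N) : ((a.val : ℕ) : ZMod N) = a := ZMod.natCast_rightInverse a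

lemma val_sub_one {b : ZMod N} (hb : b ≠ 0) : (b - 1).val = b.val - 1 := by
  have h1 : 1 ≤ b.val := Nat.one_le_iff_ne_zero.2 fun h => hb ((ZMod.val_eq_zero b).1 h)
  have hlt : b.val - 1 < N := lt_of_le_of_lt (Nat.sub_le _ _) (ZMod.val_lt b)
  have : b - 1 = ((b.val - 1 : ℕ) : ZMod N) := by
    rw [Nat.cast_sub h1, val_cast_val, Nat.cast_one]
  rw [this, ZMod.val_cast_of_lt hlt]

lemma val_neg_one' : (-1 : ZMod N) = ((N - 1 : ℕ) : ZMod N) := by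
  obtain ⟨n, rfl⟩ : ∃ n, N = n + 1 := ⟨N - 1, (Nat.succ_pred_eq_of_pos (Nat.pos_of_ne_zero (NeZero.ne N))).symm⟩
  have : ((n + 1 - 1 : ℕ) : ZMod (n+1)) = (n : ZMod (n+1)) := by norm_num
  rw [this, ← val_cast_val (n+1) (-1 : ZMod (n+1)), ZMod.val_neg_one]

lemma val_neg_one : (-1 : ZMod N).val = N - 1 := by
  rw [val_neg_one', ZMod.val_cast_of_lt (Nat.sub_lt (Nat.pos_of_ne_zero (NeZero.ne N)) one_pos)]

lemma cnt_col (w : GridGen N) (a b : ZMod N) :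
    cntZ N w a b - cntZ N w (a - 1) b
      = (if (w a).val ≤ b.val then 1 else 0)
        - (if a = 0 then ∑ i : ZMod N, (if i.val ≤ b.val then (1:ℤ) else 0) else 0) := by
  by_cases ha : a = 0
  · subst ha
    have h1 : cntZ N w 0 b = (if (w 0).val ≤ b.val then 1 else 0) := by
      rw [cntZ]
      rw [Finset.sum_eq_single 0]
      · simp [ZMod.val_zero]
      · intro i _ hi
        rw [if_neg]
        rintro ⟨h1, -⟩
        exact hi ((ZMod.val_eq_zero i).1 (Nat.le_zero.1 (by simpa [ZMod.val_zero] using h1)))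
      · simp
    have h2 : cntZ N w (0 - 1) b = ∑ i : ZMod N, (if i.val ≤ b.val then (1:ℤ) else 0) := by
      rw [cntZ]
      have : ∀ i : ZMod N, i.val ≤ (0 - 1 : ZMod N).val := by
        intro i
        rw [zero_sub, val_neg_one]
        have := ZMod.val_lt i
        omega
      rw [Finset.sum_congr rfl fun i _ => by rw [if_congr (and_iff_right (this i)) rfl rfl]]
      exact Equiv.sum_comp w (fun u : ZMod N => if u.val ≤ b.val then (1:ℤ) else 0)
    rw [h1, h2, if_pos rfl]
  · rw [if_neg ha, sub_zero, cntZ, cntZ, ← Finset.sum_sub_distrib]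
    have h1 : 1 ≤ a.val := Nat.one_le_iff_ne_zero.2 fun h => ha ((ZMod.val_eq_zero a).1 h)
    have hval : (a - 1).val = a.val - 1 := val_sub_one N ha
    rw [Finset.sum_eq_single a]
    · rw [hval]
      by_cases hq : (w a).val ≤ b.val
      · rw [if_pos ⟨le_refl _, hq⟩, if_neg (show ¬(a.val ≤ a.val - 1 ∧ (w a).val ≤ b.val) by omega),
          if_pos hq]
        norm_num
      · rw [if_neg (by tauto), if_neg (by tauto), if_neg hq]
        norm_num
    · intro i _ hi
      have hne : i.val ≠ a.val := fun h => hi (ZMod.val_injective N h)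
      rw [hval]
      by_cases hq : (w i).val ≤ b.val
      · by_cases hle : i.val ≤ a.val - 1
        · rw [if_pos ⟨by omega, hq⟩, if_pos ⟨hle, hq⟩, sub_self]
        · rw [if_neg (by omega), if_neg (by tauto), sub_self]
      · rw [if_neg (by tauto), if_neg (by tauto), sub_self]
    · simp

lemma cnt_row_step (w : GridGen N) (a b : ZMod N) :
    ((if (w a).val ≤ b.val then 1 else 0) : ℤ) - (if (w a).val ≤ (b - 1).val then 1 else 0)
      = (if w a = b then 1 else 0) - (if b = 0 then 1 else 0) := by
  have hvlt := ZMod.val_lt (w a)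
  by_cases hb : b = 0
  · subst hb
    have hv2 : (0 - 1 : ZMod N).val = N - 1 := by rw [zero_sub, val_neg_one]
    rw [hv2, ZMod.val_zero]
    by_cases h : w a = 0
    · have hz : (w a).val = 0 := by rw [h, ZMod.val_zero]
      rw [if_pos (show (w a).val ≤ 0 by omega), if_pos (show (w a).val ≤ N - 1 by omega),
        if_pos h, if_pos rfl]
    · have hnz : (w a).val ≠ 0 := fun hc => h ((ZMod.val_eq_zero _).1 hc)
      rw [if_neg (show ¬(w a).val ≤ 0 by omega), if_pos (show (w a).val ≤ N - 1 by omega),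
        if_neg h, if_pos rfl]
  · rw [if_neg hb, sub_zero, val_sub_one N hb]
    have h1 : 1 ≤ b.val := Nat.one_le_iff_ne_zero.2 fun h => hb ((ZMod.val_eq_zero b).1 h)
    by_cases h : w a = b
    · have hz : (w a).val = b.val := by rw [h]
      rw [if_pos (show (w a).val ≤ b.val by omega),
        if_neg (show ¬(w a).val ≤ b.val - 1 by omega), if_pos h]
      norm_num
    · have hne : (w a).val ≠ b.val := fun hc => h (ZMod.val_injective N hc)
      rw [if_neg h]
      by_cases hle : (w a).val ≤ b.val - 1
      · rw [if_pos (show (w a).val ≤ b.val by omega), if_pos hle]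
        norm_num
      · rw [if_neg (show ¬(w a).val ≤ b.val by omega), if_neg hle]
        norm_num

lemma corner_W (x y : GridGen N) (a b : ZMod N) :
    cornerSum N (fun a b => cntZ N x a b - cntZ N y a b) a b
      = (if x a = b then 1 else 0) - (if y a = b then 1 else 0) := by
  have e1 := cnt_col N x a b
  have e2 := cnt_col N y a b
  have e3 := cnt_col N x a (b - 1)
  have e4 := cnt_col N y a (b - 1)
  have s1 := cnt_row_step N x a b
  have s2 := cnt_row_step N y a b
  simp only [cornerSum]
  linarith

section Periodic

variable {N} (E : ZMod N → ZMod N → ℤ) (hE : ∀ a b : ZMod N, cornerSum N E a b = 0)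

include hE

lemma per_row : ∀ (a b : ZMod N), E a b - E a (b - 1) = E 0 b - E 0 (b - 1) := by
  have key : ∀ (k : ℕ) (b : ZMod N),
      E (k : ZMod N) b - E (k : ZMod N) (b - 1) = E 0 b - E 0 (b - 1) := by
    intro k
    induction k with
    | zero => intro b; norm_num
    | succ n ih =>
      intro b
      have h := hE ((n + 1 : ℕ) : ZMod N) b
      have hc : ((n + 1 : ℕ) : ZMod N) - 1 = ((n : ℕ) : ZMod N) := by push_cast; ring
      rw [cornerSum, hc] at h
      have h2 := ih b
      linarith
  intro a b
  have := key a.val b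
  rwa [val_cast_val] at this

lemma per_decomp : ∀ (a b : ZMod N), E a b = E a 0 + E 0 b - E 0 0 := by
  have key : ∀ (k : ℕ) (a : ZMod N), E a (k : ZMod N) = E a 0 + E 0 (k : ZMod N) - E 0 0 := by
    intro k
    induction k with
    | zero => intro a; norm_num
    | succ n ih =>
      intro a
      have h := per_row E hE a ((n + 1 : ℕ) : ZMod N)
      have hc : ((n + 1 : ℕ) : ZMod N) - 1 = ((n : ℕ) : ZMod N) := by push_cast; ring
      rw [hc] at h
      have h2 := ih a
      linarith
  intro a b
  have := key b.val a
  rwa [val_cast_val] at this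

end Periodic

lemma domain_sum (σO σX x y : GridGen N) (D : ZMod N → ZMod N → ℤ)
    (hD : IsGridDomain N x y D) :
    ∑ i : ZMod N, (D i (σX i) - D i (σO i))
      = ∑ j : ZMod N, ((cntZ N x j (σX j) - cntZ N y j (σX j))
          - (cntZ N x j (σO j) - cntZ N y j (σO j))) := by
  set W : ZMod N → ZMod N → ℤ := fun a b => cntZ N x a b - cntZ N y a b with hWdef
  set E : ZMod N → ZMod N → ℤ := fun a b => D a b - W a b with hEdef
  have hD' : ∀ a b : ZMod N, cornerSum N D a b
      = (if x a = b then 1 else 0) - (if y a = b then 1 else 0) := by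
    intro a b
    rw [hD a b]
    by_cases h1 : x a = b <;> by_cases h2 : y a = b <;> simp [h1, h2]
  have hE : ∀ a b : ZMod N, cornerSum N E a b = 0 := by
    intro a b
    have h1 := hD' a b
    have h2 := corner_W N x y a b
    simp only [cornerSum, hEdef, hWdef] at h1 h2 ⊢
    linarith
  have hdec := per_decomp E hE
  have hsplit : ∀ i : ZMod N, D i (σX i) - D i (σO i)
      = (W i (σX i) - W i (σO i)) + (E 0 (σX i) - E 0 (σO i)) := by
    intro i
    have d1 : D i (σX i) = W i (σX i) + E i (σX i) := by simp [hEdef]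
    have d2 : D i (σO i) = W i (σO i) + E i (σO i) := by simp [hEdef]
    have e1 := hdec i (σX i)
    have e2 := hdec i (σO i)
    linarith
  rw [Finset.sum_congr rfl fun i _ => hsplit i, Finset.sum_add_distrib]
  have hz : ∑ i : ZMod N, (E 0 (σX i) - E 0 (σO i)) = 0 := by
    rw [Finset.sum_sub_distrib, Equiv.sum_comp σX (E 0), Equiv.sum_comp σO (E 0), sub_self]
  rw [hz, add_zero]

end Domain

section Parity

variable (N : ℕ) [NeZero N]

def zmodFinEquiv : ZMod N ≃ Fin N where
  toFun a := ⟨a.val, ZMod.val_lt a⟩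
  invFun k := ((k.val : ℕ) : ZMod N)
  left_inv a := val_cast_val N a
  right_inv k := Fin.ext (ZMod.val_cast_of_lt k.isLt)

lemma sign_eq_signAux {n : ℕ} (f : Equiv.Perm (Fin n)) :
    Equiv.Perm.sign f = Equiv.Perm.signAux f := by
  have key : ∀ (s : Multiset (Fin n)) (hs : ∀ x, x ∈ s),
      Equiv.Perm.signAux3 f hs = Equiv.Perm.signAux f := by
    intro s
    induction s using Quotient.inductionOn with
    | h l =>
      intro hs
      show Equiv.Perm.signAux2 l f = Equiv.Perm.signAux f
      rw [← Equiv.Perm.signAux_eq_signAux2 l f (Equiv.refl _) (fun x _ => hs x)]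
      congr 1
  exact key Finset.univ.val Finset.mem_univ

/-- Number of (ordered, decreasing) disagreeing pairs of `g`. -/
def disF {n : ℕ} (g : Equiv.Perm (Fin n)) : ℕ :=
  ∑ a : Fin n, ∑ b : Fin n, if b < a ∧ g a ≤ g b then 1 else 0

/-- Number of (ordered, increasing) agreeing pairs of `g`. -/
def nizF {n : ℕ} (g : Equiv.Perm (Fin n)) : ℕ :=
  ∑ a : Fin n, ∑ b : Fin n, if a < b ∧ g a < g b then 1 else 0

lemma signAux_eq_pow {n : ℕ} (g : Equiv.Perm (Fin n)) :
    Equiv.Perm.signAux g = (-1 : ℤˣ) ^ disF g := by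
  have h1 : disF g = ∑ x ∈ Equiv.Perm.finPairsLT n, (if g x.1 ≤ g x.2 then 1 else 0) := by
    have hset : Equiv.Perm.finPairsLT n
        = Finset.univ.filter (fun x : Σ _ : Fin n, Fin n => x.2 < x.1) := by
      ext x
      simp [Equiv.Perm.mem_finPairsLT]
    rw [hset, Finset.sum_filter, ← Finset.univ_sigma_univ, Finset.sum_sigma]
    unfold disF
    refine Finset.sum_congr rfl fun a _ => Finset.sum_congr rfl fun b _ => ?_
    by_cases h1 : b < a <;> by_cases h2 : g a ≤ g b <;> simp [h1, h2]
  rw [h1, ← Finset.prod_pow_eq_pow_sum]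
  unfold Equiv.Perm.signAux
  refine Finset.prod_congr rfl fun x _ => ?_
  by_cases h2 : g x.1 ≤ g x.2 <;> simp [h2]

lemma nizF_add_disF {n : ℕ} (g : Equiv.Perm (Fin n)) :
    nizF g + disF g = ∑ a : Fin n, ∑ b : Fin n, if b < a then 1 else 0 := by
  have h0 : (∑ a : Fin n, ∑ b : Fin n, (if a < b ∧ g a < g b then 1 else 0) : ℕ)
      = ∑ a : Fin n, ∑ b : Fin n, (if b < a ∧ g b < g a then 1 else 0) := Finset.sum_comm
  unfold nizF disF
  rw [h0]
  simp only [← Finset.sum_add_distrib]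
  refine Finset.sum_congr rfl fun a _ => Finset.sum_congr rfl fun b _ => ?_
  by_cases h1 : b < a
  · rcases lt_or_ge (g b) (g a) with h2 | h2
    · simp [h1, h2, not_le.2 h2]
    · simp [h1, not_lt.2 h2, h2]
  · simp [h1]

lemma nizN_eq_nizF (σ : GridGen N) : nizN N σ = nizF ((zmodFinEquiv N).permCongr σ) := by
  have hv : ∀ a : Fin N, ((zmodFinEquiv N).symm a).val = a.val := fun a =>
    ZMod.val_cast_of_lt a.isLt
  unfold nizN nizF
  rw [← Equiv.sum_comp (zmodFinEquiv N).symm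
      (fun i : ZMod N => ∑ j : ZMod N, if i.val < j.val ∧ (σ i).val < (σ j).val then 1 else 0)]
  refine Finset.sum_congr rfl fun a _ => ?_
  rw [← Equiv.sum_comp (zmodFinEquiv N).symm
      (fun j : ZMod N => if ((zmodFinEquiv N).symm a).val < j.val
        ∧ (σ ((zmodFinEquiv N).symm a)).val < (σ j).val then 1 else 0)]
  refine Finset.sum_congr rfl fun b _ => ?_
  have hval : ∀ z : ZMod N, ((zmodFinEquiv N) z).val = z.val := fun z => rfl
  have h1 : ((zmodFinEquiv N).symm a).val < ((zmodFinEquiv N).symm b).val ↔ a < b := by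
    rw [hv a, hv b, Fin.lt_def]
  have h2 : (σ ((zmodFinEquiv N).symm a)).val < (σ ((zmodFinEquiv N).symm b)).val
      ↔ (zmodFinEquiv N).permCongr σ a < (zmodFinEquiv N).permCongr σ b := by
    rw [Fin.lt_def]
    simp [Equiv.permCongr_apply, hval]
  exact if_congr (and_congr h1 h2) rfl rfl

lemma knot_parity (σO σX : GridGen N) (hk : GridIsKnot N σO σX) :
    ∃ k : ℤ, (nizN N σO : ℤ) - nizN N σX - ((N:ℤ) - 1) = 2 * k := by
  set gO := (zmodFinEquiv N).permCongr σO with hgO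
  set gX := (zmodFinEquiv N).permCongr σX with hgX
  have hsO : Equiv.Perm.sign σO = (-1 : ℤˣ) ^ disF gO := by
    rw [← Equiv.Perm.sign_permCongr (zmodFinEquiv N) σO, ← hgO, sign_eq_signAux, signAux_eq_pow]
  have hsX : Equiv.Perm.sign σX = (-1 : ℤˣ) ^ disF gX := by
    rw [← Equiv.Perm.sign_permCongr (zmodFinEquiv N) σX, ← hgX, sign_eq_signAux, signAux_eq_pow]
  have h1 : ((-1 : ℤˣ)) ^ (nizF gO + disF gO) = ((-1 : ℤˣ)) ^ (nizF gX + disF gX) := by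
    rw [nizF_add_disF, nizF_add_disF]
  have hsupp : (σX⁻¹ * σO).support.card = N := by
    rw [hk.2, Finset.card_univ, ZMod.card]
  have h2 : ((-1 : ℤˣ)) ^ disF gX * ((-1 : ℤˣ)) ^ disF gO = -((-1 : ℤˣ)) ^ N := by
    rw [← hsO, ← hsX]
    have hc : Equiv.Perm.sign (σX⁻¹ * σO) = -((-1 : ℤˣ)) ^ N := by
      rw [hk.1.sign, hsupp]
    rw [← hc, Equiv.Perm.sign_mul, Equiv.Perm.sign_inv]
  -- move to ℤ
  have h1' : ((-1 : ℤ)) ^ (nizF gO + disF gO) = ((-1 : ℤ)) ^ (nizF gX + disF gX) := by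
    have := congrArg Units.val h1
    push_cast at this
    exact this
  have h2' : ((-1 : ℤ)) ^ disF gX * ((-1 : ℤ)) ^ disF gO = -((-1 : ℤ)) ^ N := by
    have := congrArg Units.val h2
    push_cast at this
    exact this
  have sqz : ∀ m : ℕ, ((-1 : ℤ)) ^ m * ((-1 : ℤ)) ^ m = 1 := fun m => by
    rw [← pow_add]
    exact Even.neg_one_pow ⟨m, rfl⟩
  have h3 : ((-1 : ℤ)) ^ (nizF gO + nizF gX + N)
      * (((-1 : ℤ)) ^ disF gX * ((-1 : ℤ)) ^ disF gO * ((-1 : ℤ)) ^ N) = 1 := by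
    have e : ((-1 : ℤ)) ^ (nizF gO + nizF gX + N)
        * (((-1 : ℤ)) ^ disF gX * ((-1 : ℤ)) ^ disF gO * ((-1 : ℤ)) ^ N)
        = ((-1 : ℤ)) ^ (nizF gO + disF gO) * ((-1 : ℤ)) ^ (nizF gX + disF gX)
          * (((-1 : ℤ)) ^ N * ((-1 : ℤ)) ^ N) := by
      rw [pow_add, pow_add, pow_add, pow_add]
      ring
    rw [e, sqz N, mul_one, h1', sqz]
  have h4 : ((-1 : ℤ)) ^ (nizF gO + nizF gX + N) = -1 := by
    rw [h2', neg_mul, mul_neg] at h3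
    have := sqz N
    nlinarith [h3]
  have hodd : Odd (nizF gO + nizF gX + N) := by
    rcases Nat.even_or_odd (nizF gO + nizF gX + N) with he | ho
    · rw [he.neg_one_pow] at h4
      norm_num at h4
    · exact ho
  obtain ⟨t, ht⟩ := hodd
  rw [← nizN_eq_nizF, ← nizN_eq_nizF] at ht
  have hdvd : (2:ℤ) ∣ ((nizN N σO : ℤ) - nizN N σX - ((N:ℤ) - 1)) := by omega
  obtain ⟨k, hkk⟩ := hdvd
  exact ⟨k, hkk⟩

end Parity

end GridAux

/-- For generators `x, y` and any `D ∈ 𝒟(x,y)`,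
`A(x) − A(y) = Σᵢ (n_{Xᵢ}(D) − n_{Oᵢ}(D))`; moreover if the grid diagram
represents a knot then `A` takes integer values on every generator. -/
theorem absolute_refines_relative_alexander (N : ℕ) [NeZero N] (hN : 2 ≤ N)
    (σO σX : GridGen N) (hσ : ∀ i : ZMod N, σO i ≠ σX i)
    (x y : GridGen N) (D : ZMod N → ZMod N → ℤ) (hD : IsGridDomain N x y D) :
    (AlexGrading N σO σX x - AlexGrading N σO σX y =
        ∑ i : ZMod N, ((D i (σX i) : ℚ) - (D i (σO i) : ℚ))) ∧
      (GridIsKnot N σO σX → ∀ w : GridGen N, ∃ m : ℤ, AlexGrading N σO σX w = (m : ℚ)) := by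
  constructor
  · -- relative Alexander grading
    have hdom := GridAux.domain_sum N σO σX x y D hD
    have hq : (∑ i : ZMod N, ((D i (σX i) : ℚ) - (D i (σO i) : ℚ)))
        = ∑ j : ZMod N, (((GridAux.cntZ N x j (σX j) : ℚ) - (GridAux.cntZ N y j (σX j) : ℚ))
            - ((GridAux.cntZ N x j (σO j) : ℚ) - (GridAux.cntZ N y j (σO j) : ℚ))) := by
      exact_mod_cast congrArg (fun z : ℤ => (z : ℚ)) hdom
    have hsplit : (∑ j : ZMod N, ((GridAux.cntZ N x j (σX j) : ℚ) - (GridAux.cntZ N x j (σO j) : ℚ)))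
        - (∑ j : ZMod N, ((GridAux.cntZ N y j (σX j) : ℚ) - (GridAux.cntZ N y j (σO j) : ℚ)))
        = ∑ j : ZMod N, (((GridAux.cntZ N x j (σX j) : ℚ) - (GridAux.cntZ N y j (σX j) : ℚ))
            - ((GridAux.cntZ N x j (σO j) : ℚ) - (GridAux.cntZ N y j (σO j) : ℚ))) := by
      rw [← Finset.sum_sub_distrib]
      exact Finset.sum_congr rfl fun j _ => by ring
    rw [GridAux.alex_formula N σO σX x, GridAux.alex_formula N σO σX y]
    linarith [hq, hsplit]
  · -- integrality
    intro hk w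
    obtain ⟨k, hk2⟩ := GridAux.knot_parity N σO σX hk
    refine ⟨(∑ j : ZMod N, (GridAux.cntZ N w j (σX j) - GridAux.cntZ N w j (σO j))) + k, ?_⟩
    rw [GridAux.alex_formula N σO σX w]
    have hc : ((GridAux.nizN N σO : ℚ) - (GridAux.nizN N σX : ℚ)) / 2 - ((N:ℚ) - 1)/2
        = (k : ℚ) := by
      have h := congrArg (fun z : ℤ => (z : ℚ)) hk2
      push_cast at h
      linarith
    push_cast
    linarith [hc]
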